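/- For a graph G on n vertices, the second smallest signless Laplacian eigenvalue satisfies γ_{n−1}(G) ≤ d_{n−1}(G) + 1, where d_{n−1}(G) is the second smallest vertex degree; moreover if equality holds then d_{n−1}(G) = dₙ(G). -/

import Mathlib

open Matrix SimpleGraph Polynomial

/-- The signless Laplacian matrix Q(G) = D(G) + A(G). -/
noncomputable def signlessLaplacian {V : Type*} [Fintype V] [DecidableEq V]
    (G : SimpleGraph V) [DecidableRel G.Adj] : Matrix V V ℝ :=
  Matrix.diagonal (fun v => (G.degree v : ℝ)) + G.adjMatrix ℝ

/-- Eigenvalues (roots of the characteristic polynomial, with multiplicity),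
sorted in non-increasing order. -/
noncomputable def eigsDesc {V : Type*} [Fintype V] [DecidableEq V] (M : Matrix V V ℝ) : List ℝ :=
  (M.charpoly.roots.sort (· ≤ ·)).reverse

/-- Vertex degrees sorted in non-increasing order. -/
noncomputable def degsDesc {V : Type*} [Fintype V] [DecidableEq V]
    (G : SimpleGraph V) [DecidableRel G.Adj] : List ℕ :=
  ((Finset.univ.val.map fun v => G.degree v).sort (· ≤ ·)).reverse

section Lemmas
open Matrix Polynomial

lemma charpoly_unitary_conj {n : Type*} [Fintype n] [DecidableEq n]
    (U B : Matrix n n ℝ) (hU : U ∈ Matrix.unitaryGroup n ℝ) :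
    (U * B * star U).charpoly = B.charpoly := by
  have h1 : U * star U = 1 := (Matrix.mem_unitaryGroup_iff).mp hU
  have h2 : star U * U = 1 := (Matrix.mem_unitaryGroup_iff').mp hU
  have hC : ∀ M N : Matrix n n ℝ, (M * N).map (C : ℝ →+* ℝ[X]) = M.map C * N.map C := by
    intro M N; exact Matrix.map_mul
  unfold Matrix.charpoly Matrix.charmatrix
  simp only [RingHom.mapMatrix_apply]
  have key : scalar n (X : ℝ[X]) - (U * B * star U).map C
      = U.map C * (scalar n (X : ℝ[X]) - B.map C) * (star U).map C := by
    rw [Matrix.mul_sub, Matrix.sub_mul, hC, hC]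
    congr 1
    have : (U.map (C : ℝ →+* ℝ[X])) * scalar n (X : ℝ[X]) * ((star U).map C)
        = (U.map C * (star U).map C) * scalar n (X : ℝ[X]) := by
      rw [mul_assoc, Matrix.scalar_commute X (fun r => Commute.all X r) ((star U).map C),
        ← mul_assoc]
    rw [this, ← hC, h1]
    simp
  rw [key, Matrix.det_mul, Matrix.det_mul, mul_comm, ← mul_assoc, ← Matrix.det_mul, ← hC, h2]
  simp

lemma charpoly_roots_hermitian {n : Type*} [Fintype n] [DecidableEq n]
    {A : Matrix n n ℝ} (hA : A.IsHermitian) :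
    A.charpoly.roots = (Finset.univ.val.map hA.eigenvalues) := by
  have hspec := hA.spectral_theorem
  have hdiag : A.charpoly
      = (Matrix.diagonal (RCLike.ofReal ∘ hA.eigenvalues) : Matrix n n ℝ).charpoly := by
    conv_lhs => rw [hspec]
    exact charpoly_unitary_conj _ _ hA.eigenvectorUnitary.2
  have hcm : (Matrix.diagonal (RCLike.ofReal ∘ hA.eigenvalues) : Matrix n n ℝ).charpoly
      = ∏ i, (X - C (hA.eigenvalues i)) := by
    unfold Matrix.charpoly Matrix.charmatrix
    simp only [RingHom.mapMatrix_apply]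
    have : scalar n (X : ℝ[X]) - (Matrix.diagonal (RCLike.ofReal ∘ hA.eigenvalues) : Matrix n n ℝ).map C
        = Matrix.diagonal (fun i => X - C (hA.eigenvalues i)) := by
      rw [Matrix.diagonal_map (by simp)]
      rw [show (scalar n (X : ℝ[X])) = Matrix.diagonal (fun _ => (X:ℝ[X])) from rfl,
        ← Matrix.diagonal_sub]
      simp [Function.comp]
    rw [this, Matrix.det_diagonal]
  rw [hdiag, hcm]
  have : (∏ i, (X - C (hA.eigenvalues i)))
      = ((Finset.univ.val.map hA.eigenvalues).map (fun a => X - C a)).prod := by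
    rw [Multiset.map_map]; rfl
  rw [this, Polynomial.roots_multiset_prod_X_sub_C]
open Matrix Polynomial

local notation "⟪" x ", " y "⟫" => @inner ℝ _ _ x y

lemma rayleigh_two {n : Type*} [Fintype n] [DecidableEq n] {A : Matrix n n ℝ}
    (hA : A.IsHermitian) (γ : ℝ)
    (hcard : (Finset.univ.filter (fun i => ¬ γ ≤ hA.eigenvalues i)).card ≤ 1)
    {u v : n} (huv : u ≠ v) :
    ∃ a b : ℝ, (a ≠ 0 ∨ b ≠ 0) ∧
      γ * (a ^ 2 + b ^ 2) ≤ a ^ 2 * A u u + 2 * a * b * A u v + b ^ 2 * A v v := by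
  classical
  set bas := hA.eigenvectorBasis with hbas
  set μ := hA.eigenvalues with hμ
  set T := Matrix.toEuclideanLin A with hT
  have hsym : T.IsSymmetric := (Matrix.isHermitian_iff_isSymmetric.1 hA)
  set E : n → EuclideanSpace ℝ n := fun s => EuclideanSpace.single s (1:ℝ) with hE
  have hTb : ∀ i, T (bas i) = μ i • bas i := by
    intro i
    have h := hA.mulVec_eigenvectorBasis i
    ext j
    have := congrFun h j
    simpa [hT, toEuclideanLin_apply] using this
  set J := (Finset.univ.filter (fun i => ¬ γ ≤ μ i)) with hJ
  obtain ⟨a, b, hab, horth⟩ :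
      ∃ a b : ℝ, (a ≠ 0 ∨ b ≠ 0) ∧ ∀ i ∈ J, a * (bas i) u + b * (bas i) v = 0 := by
    rcases J.eq_empty_or_nonempty with h | ⟨i0, hi0⟩
    · exact ⟨1, 0, Or.inl one_ne_zero, by simp [h]⟩
    · have hJe : J = {i0} := Finset.eq_singleton_iff_unique_mem.mpr
        ⟨hi0, fun j hj => Finset.card_le_one.1 hcard j hj i0 hi0⟩
      by_cases hc : (bas i0) u = 0 ∧ (bas i0) v = 0
      · refine ⟨1, 0, Or.inl one_ne_zero, ?_⟩
        intro i hi
        rw [hJe, Finset.mem_singleton] at hi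
        subst hi
        simp [hc.1, hc.2]
      · refine ⟨(bas i0) v, -((bas i0) u), ?_, ?_⟩
        · rcases not_and_or.1 hc with h | h
          · exact Or.inr (by simpa using h)
          · exact Or.inl h
        · intro i hi
          rw [hJe, Finset.mem_singleton] at hi
          subst hi
          ring
  set x : EuclideanSpace ℝ n := a • E u + b • E v with hx
  have hinner_single : ∀ (y : EuclideanSpace ℝ n) (s : n), ⟪y, E s⟫ = y s := by
    intro y s
    simp [hE, EuclideanSpace.inner_single_right]
  have hxcoord : ∀ s : n, x s = a * (E u) s + b * (E v) s := by
    intro s; simp [hx]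
  have hEcoord : ∀ s t : n, (E s) t = if t = s then (1:ℝ) else 0 := by
    intro s t; simp [hE, EuclideanSpace.single_apply]
  have hxbas : ∀ i ∈ J, ⟪bas i, x⟫ = 0 := by
    intro i hi
    have h0 := horth i hi
    have : ⟪bas i, x⟫ = a * (bas i) u + b * (bas i) v := by
      rw [real_inner_comm]
      simp only [hx, inner_add_left, inner_smul_left, conj_trivial]
      simp [hE, EuclideanSpace.inner_single_left]
    rw [this, h0]
  have key : γ * ⟪x, x⟫ ≤ ⟪T x, x⟫ := by
    have h1 : ⟪T x, x⟫ = ∑ i, μ i * ⟪bas i, x⟫ ^ 2 := by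
      rw [← bas.sum_inner_mul_inner (T x) x]
      refine Finset.sum_congr rfl fun i _ => ?_
      rw [hsym x (bas i), hTb i, inner_smul_right, real_inner_comm x (bas i)]
      ring
    have h2 : ⟪x, x⟫ = ∑ i, ⟪bas i, x⟫ ^ 2 := by
      rw [← bas.sum_inner_mul_inner x x]
      refine Finset.sum_congr rfl fun i _ => ?_
      rw [real_inner_comm x (bas i)]
      ring
    rw [h1, h2, Finset.mul_sum]
    refine Finset.sum_le_sum fun i _ => ?_
    by_cases hi : γ ≤ μ i
    · exact mul_le_mul_of_nonneg_right hi (sq_nonneg _)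
    · rw [hxbas i (Finset.mem_filter.2 ⟨Finset.mem_univ i, hi⟩)]
      simp
  -- compute the two inner products explicitly
  have hTE : ∀ s t : n, (T (E s)) t = A t s := by
    intro s t
    have : T (E s) = (WithLp.equiv 2 (n → ℝ)).symm (A *ᵥ Pi.single s 1) := by
      rw [hT, toEuclideanLin_apply]
      congr 1
    rw [this]
    simp [Matrix.mulVec_single]
  have hTxc : ∀ t : n, (T x) t = a * A t u + b * A t v := by
    intro t
    have : T x = a • T (E u) + b • T (E v) := by
      rw [hx, map_add, T.map_smul, T.map_smul]
    rw [this]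
    simp [hTE]
  have hxx : ⟪x, x⟫ = a ^ 2 + b ^ 2 := by
    have : ⟪x, x⟫ = a * x u + b * x v := by
      simp only [hx, inner_add_right, inner_smul_right, hinner_single, conj_trivial]
    rw [this, hxcoord u, hxcoord v, hEcoord, hEcoord, hEcoord, hEcoord]
    simp [huv, Ne.symm huv]
    ring
  have hTxx : ⟪T x, x⟫ = a ^ 2 * A u u + 2 * a * b * A u v + b ^ 2 * A v v := by
    have : ⟪T x, x⟫ = a * (T x) u + b * (T x) v := by
      simp only [hx, inner_add_right, inner_smul_right, hinner_single, conj_trivial]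
    rw [this, hTxc u, hTxc v]
    have hAvu : A v u = A u v := by
      have := hA.apply u v
      simpa using this
    rw [hAvu]
    ring
  refine ⟨a, b, hab, ?_⟩
  rw [← hxx, ← hTxx]
  exact key

-- Lemma A: count of elements ≥ second-smallest is ≥ n-1
lemma countP_ge_second (M : Multiset ℝ) (n : ℕ) (hM : Multiset.card M = n) (hn : 2 ≤ n) :
    n - 1 ≤ Multiset.countP
      (fun x => ((M.sort (· ≤ ·)).reverse.getD (n-2) 0) ≤ x) M := by
  set s := M.sort (· ≤ ·) with hs
  have hlen : s.length = n := by rw [hs, Multiset.length_sort, hM]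
  have hsort : List.Pairwise (· ≤ ·) s := Multiset.pairwise_sort _ _
  have h1n : 1 < s.length := by omega
  have hγ : (s.reverse.getD (n-2) 0) = s[1]'h1n := by
    have hrl : s.reverse.length = n := by simp [hlen]
    rw [List.getD_eq_getElem _ _ (by omega : n - 2 < s.reverse.length),
      List.getElem_reverse]
    congr 1
    omega
  rw [hγ]
  have hM' : M = ↑s := (Multiset.sort_eq _ _).symm
  rw [hM', Multiset.coe_countP]
  have hsub : List.countP (fun b => decide (s[1]'h1n ≤ b)) (s.drop 1)
      ≤ List.countP (fun b => decide (s[1]'h1n ≤ b)) s :=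
    (List.drop_sublist 1 s).countP_le
  have hdrop : List.countP (fun b => decide (s[1]'h1n ≤ b)) (s.drop 1) = (s.drop 1).length := by
    rw [List.countP_eq_length]
    intro x hx
    obtain ⟨j, hj, hjx⟩ := List.mem_iff_getElem.1 hx
    rw [List.getElem_drop] at hjx
    have : s[1]'h1n ≤ s[1+j]'(by simp at hj; omega) := by
      have := hsort.rel_get_of_le (a := ⟨1, h1n⟩) (b := ⟨1+j, by simp at hj; omega⟩)
        (by simp)
      simpa using this
    subst hjx
    simpa using this
  rw [hdrop] at hsub
  have : (s.drop 1).length = n - 1 := by simp [hlen]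
  omega

-- Lemma B: extract two distinct elements realizing the two smallest values
lemma exists_pair_of_sort {α : Type*} [DecidableEq α] [Fintype α] (f : α → ℕ)
    (hn : 2 ≤ Fintype.card α) :
    ∃ u v : α, u ≠ v ∧
      f v = ((Finset.univ.val.map f).sort (· ≤ ·)).getD 0 0 ∧
      f u = ((Finset.univ.val.map f).sort (· ≤ ·)).getD 1 0 := by
  classical
  set t := (Finset.univ.val.map f).sort (· ≤ ·) with ht
  have hlen : t.length = Fintype.card α := by
    rw [ht, Multiset.length_sort]; simp
  have hteq : (↑t : Multiset ℕ) = Finset.univ.val.map f := Multiset.sort_eq _ _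
  have h0 : 0 < t.length := by omega
  have h1 : 1 < t.length := by omega
  have ht0 : t.getD 0 0 = t[0] := List.getD_eq_getElem _ _ h0
  have ht1 : t.getD 1 0 = t[1] := List.getD_eq_getElem _ _ h1
  -- t[0] is in the multiset
  have hmem0 : t[0] ∈ Finset.univ.val.map f := by
    rw [← hteq]; exact List.getElem_mem h0
  obtain ⟨v, -, hv⟩ := Multiset.mem_map.1 hmem0
  have hcons : Finset.univ.val = v ::ₘ Finset.univ.val.erase v :=
    (Multiset.cons_erase (Eq.mpr Finset.mem_val (Finset.mem_univ v))).symm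
  -- t as a multiset starts t[0] ::ₘ t[1] ::ₘ ...
  have htlist : t = t[0] :: t[1] :: t.drop 2 := by
    apply List.ext_getElem
    · simp; omega
    · intro i hi hi'
      match i with
      | 0 => simp
      | 1 => simp
      | (k+2) =>
        simp only [List.getElem_cons_succ]
        rw [List.getElem_drop]
        congr 1
        omega
  have hmul : (t[0] ::ₘ t[1] ::ₘ (↑(t.drop 2) : Multiset ℕ))
      = f v ::ₘ (Finset.univ.val.erase v).map f := by
    rw [show (t[0] ::ₘ t[1] ::ₘ (↑(t.drop 2) : Multiset ℕ)) = (↑t : Multiset ℕ) by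
      conv_rhs => rw [htlist]
      rfl]
    rw [hteq]
    conv_lhs => rw [hcons]
    rw [Multiset.map_cons]
  have hmem1 : t[1] ∈ (Finset.univ.val.erase v).map f := by
    have := congrArg (fun m => Multiset.erase m (f v)) hmul
    rw [Multiset.erase_cons_head] at this
    rw [← this, hv]
    rw [Multiset.erase_cons_head]
    exact Multiset.mem_cons_self _ _
  obtain ⟨u, hu_mem, hu⟩ := Multiset.mem_map.1 hmem1
  have huv : u ≠ v := by
    have hnd : (Finset.univ.val : Multiset α).Nodup := Finset.univ.nodup
    exact (Multiset.Nodup.mem_erase_iff hnd).1 hu_mem |>.1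
  exact ⟨u, v, huv, by rw [ht0, hv], by rw [ht1, hu]⟩

end Lemmas

set_option maxHeartbeats 1000000 in
theorem stmt_16 {V : Type*} [Fintype V] [DecidableEq V] (G : SimpleGraph V)
    [DecidableRel G.Adj] (hn : 2 ≤ Fintype.card V) :
    (eigsDesc (signlessLaplacian G)).getD (Fintype.card V - 2) 0
        ≤ ((degsDesc G).getD (Fintype.card V - 2) 0 : ℝ) + 1 ∧
      ((eigsDesc (signlessLaplacian G)).getD (Fintype.card V - 2) 0
          = ((degsDesc G).getD (Fintype.card V - 2) 0 : ℝ) + 1 →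
        (degsDesc G).getD (Fintype.card V - 2) 0
          = (degsDesc G).getD (Fintype.card V - 1) 0) := by
  classical
  set n := Fintype.card V with hn'
  set Q := signlessLaplacian G with hQdef
  have hQ : Q.IsHermitian := by
    ext i j
    simp only [hQdef, signlessLaplacian, Matrix.conjTranspose_apply, Matrix.add_apply,
      Matrix.diagonal_apply, SimpleGraph.adjMatrix_apply, star_trivial]
    by_cases h : i = j
    · subst h; simp
    · simp [h, Ne.symm h, G.adj_comm i j]
  set μ := hQ.eigenvalues with hμ
  have hroots : Q.charpoly.roots = Finset.univ.val.map μ := charpoly_roots_hermitian hQ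
  have hMcard : Multiset.card (Finset.univ.val.map μ) = n := by simp [hn']
  set γ := (eigsDesc Q).getD (n - 2) 0 with hγdef
  have hγ : γ = (((Finset.univ.val.map μ).sort (· ≤ ·)).reverse).getD (n - 2) 0 := by
    rw [hγdef, eigsDesc, hroots]
  -- at least n-1 eigenvalues are ≥ γ
  have hcount : n - 1 ≤ Multiset.countP (fun x => γ ≤ x) (Finset.univ.val.map μ) := by
    rw [hγ]
    exact countP_ge_second _ n hMcard hn
  have hfilter : (Finset.univ.filter (fun i => γ ≤ μ i)).card
      = Multiset.countP (fun x => γ ≤ x) (Finset.univ.val.map μ) := by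
    rw [Multiset.countP_map, Finset.card_def, Finset.filter_val]
  have hcompl : (Finset.univ.filter (fun i => ¬ γ ≤ μ i)).card ≤ 1 := by
    have h := Finset.card_filter_add_card_filter_not
      (s := (Finset.univ : Finset V)) (p := fun i => γ ≤ μ i)
    have hcard : (Finset.univ : Finset V).card = n := rfl
    have hle : (Finset.univ.filter (fun i => γ ≤ μ i)).card ≤ n := by
      rw [← hcard]; exact Finset.card_filter_le _ _
    omega
  -- the two smallest degrees
  obtain ⟨u, v, huv, hv, hu⟩ := exists_pair_of_sort (fun v => G.degree v) hn
  set t := ((Finset.univ.val.map fun v => G.degree v).sort (· ≤ ·)) with htdef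
  have htlen : t.length = n := by rw [htdef, Multiset.length_sort]; simp [hn']
  have hdeg2 : (degsDesc G).getD (n - 2) 0 = t.getD 1 0 := by
    rw [degsDesc, ← htdef]
    rw [List.getD_eq_getElem _ _ (by simp [htlen]; omega : n - 2 < t.reverse.length),
      List.getD_eq_getElem _ _ (by omega : 1 < t.length), List.getElem_reverse]
    congr 1
    omega
  have hdeg1 : (degsDesc G).getD (n - 1) 0 = t.getD 0 0 := by
    rw [degsDesc, ← htdef]
    rw [List.getD_eq_getElem _ _ (by simp [htlen]; omega : n - 1 < t.reverse.length),
      List.getD_eq_getElem _ _ (by omega : 0 < t.length), List.getElem_reverse]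
    congr 1
    omega
  have hsorted : t.getD 0 0 ≤ t.getD 1 0 := by
    have h0 : (0:ℕ) < t.length := by omega
    have h1 : (1:ℕ) < t.length := by omega
    rw [List.getD_eq_getElem _ _ h0, List.getD_eq_getElem _ _ h1]
    have hst : List.Pairwise (· ≤ ·) t := Multiset.pairwise_sort _ _
    have := hst.rel_get_of_le (a := ⟨0, h0⟩) (b := ⟨1, h1⟩) (by simp [Fin.le_def])
    simpa using this
  -- entries of Q
  have hQuu : Q u u = (G.degree u : ℝ) := by
    simp [hQdef, signlessLaplacian]
  have hQvv : Q v v = (G.degree v : ℝ) := by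
    simp [hQdef, signlessLaplacian]
  have hQuv0 : 0 ≤ Q u v := by
    simp [hQdef, signlessLaplacian, Matrix.diagonal_apply_ne _ huv]
    split_ifs <;> norm_num
  have hQuv1 : Q u v ≤ 1 := by
    simp [hQdef, signlessLaplacian, Matrix.diagonal_apply_ne _ huv]
    split_ifs <;> norm_num
  obtain ⟨a, b, hab, hineq⟩ := rayleigh_two hQ γ hcompl huv
  rw [hQuu, hQvv, hu, hv] at hineq
  set ε := Q u v with hε
  set D1 : ℕ := t.getD 1 0 with hD1
  set D0 : ℕ := t.getD 0 0 with hD0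
  have hpos : (0:ℝ) < a ^ 2 + b ^ 2 := by
    rcases hab with h | h <;> positivity
  have hD01 : (D0 : ℝ) ≤ (D1 : ℝ) := by exact_mod_cast hsorted
  have hquad : a ^ 2 * (D1:ℝ) + 2 * a * b * ε + b ^ 2 * (D0:ℝ)
      ≤ ((D1:ℝ) + 1) * (a ^ 2 + b ^ 2) := by
    nlinarith [mul_nonneg hQuv0 (sq_nonneg (a - b)),
      mul_nonneg (by linarith : (0:ℝ) ≤ 1 - ε) (by positivity : (0:ℝ) ≤ a ^ 2 + b ^ 2),
      mul_nonneg (by linarith : (0:ℝ) ≤ (D1:ℝ) - D0) (sq_nonneg b)]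
  constructor
  · rw [hdeg2]
    have h1 : γ * (a ^ 2 + b ^ 2) ≤ ((D1:ℝ) + 1) * (a ^ 2 + b ^ 2) := le_trans hineq hquad
    exact le_of_mul_le_mul_right h1 hpos
  · intro heq
    rw [hdeg2] at heq
    rw [hdeg2, hdeg1]
    by_contra hne
    have hlt : D0 + 1 ≤ D1 := by
      have : D0 ≤ D1 := hsorted
      omega
    have hltR : (D0 : ℝ) + 1 ≤ (D1 : ℝ) := by exact_mod_cast hlt
    have hstrict : a ^ 2 * (D1:ℝ) + 2 * a * b * ε + b ^ 2 * (D0:ℝ)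
        < ((D1:ℝ) + 1) * (a ^ 2 + b ^ 2) := by
      by_cases hb : b = 0
      · have ha : a ≠ 0 := hab.resolve_right (not_not_intro hb)
        have h2 : 0 < a ^ 2 := by positivity
        subst hb
        nlinarith
      · have hb2 : 0 < b ^ 2 := by positivity
        have hε2 : ε ^ 2 ≤ 1 := by nlinarith
        have h1 : 2 * a * b * ε ≤ a ^ 2 + ε ^ 2 * b ^ 2 := by
          nlinarith [sq_nonneg (a - ε * b)]
        have h2 : ε ^ 2 * b ^ 2 ≤ b ^ 2 := by
          nlinarith [mul_nonneg (sub_nonneg.2 hε2) (sq_nonneg b)]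
        have h3 : b ^ 2 * (D0:ℝ) + b ^ 2 ≤ b ^ 2 * (D1:ℝ) := by
          nlinarith [mul_le_mul_of_nonneg_left hltR (le_of_lt hb2)]
        nlinarith [h1, h2, h3, hb2]
    rw [heq] at hineq
    linarith
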